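/- Fix an integer N > 1. If A = {a₁ < … < a_N} is the leading term of a KdV subset, then ∑_{i=1}^{N} a_i = N(N−1)/2. -/
import Mathlib


/-- A subset `S ⊆ ℤ` is of virtual cardinal zero if both `S \ ℤ≥0` and `ℤ≥0 \ S`
are finite and have the same cardinality. -/
def VirtualCardZero (S : Set ℤ) : Prop :=
  (S \ {n : ℤ | 0 ≤ n}).Finite ∧ ({n : ℤ | 0 ≤ n} \ S).Finite ∧
    (S \ {n : ℤ | 0 ≤ n}).ncard = ({n : ℤ | 0 ≤ n} \ S).ncard

/-- The shift `S + k = {s + k : s ∈ S}` of a set of integers. -/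
def shiftSet (S : Set ℤ) (k : ℤ) : Set ℤ := (fun s => s + k) '' S

/-- A KdV subset (for a fixed `N`): a subset `S ⊆ ℤ` of virtual cardinal zero
such that `S + N ⊆ S`. -/
def IsKdV (N : ℕ) (S : Set ℤ) : Prop :=
  VirtualCardZero S ∧ shiftSet S N ⊆ S

/-- `A` is the leading term of the KdV subset `S`: `A` is an `N`-element set with
`S = A ∪ (S+N)` and `A ∩ (S+N) = ∅`. -/
def IsLeadingTerm (N : ℕ) (S : Set ℤ) (A : Finset ℤ) : Prop :=
  A.card = N ∧ (↑A : Set ℤ) ∪ shiftSet S N = S ∧ (↑A : Set ℤ) ∩ shiftSet S N = ∅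

/-- The mutation `S[a] = {a+1−N} ∪ (S+1)` of a KdV subset `S` at an element `a`
of its leading term. -/
def mutate (N : ℕ) (S : Set ℤ) (a : ℤ) : Set ℤ :=
  {a + 1 - (N : ℤ)} ∪ shiftSet S 1

/-- Sign of an element of a residue class mod `Nz` is determined by the quotient. -/
lemma kdv_sign_iff (Nz q r k x : ℤ) (hNpos : 0 < Nz) (hr0 : 0 ≤ r) (hrN : r < Nz)
    (hx : x = Nz * q + r + k * Nz) : 0 ≤ x ↔ 0 ≤ q + k := by
  constructor
  · intro h
    by_contra hc
    push_neg at hc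
    have h1 : q + k ≤ -1 := by omega
    nlinarith
  · intro h
    nlinarith

/-- Fix `N > 1`.  If `A` is the leading term of a KdV subset, then
`∑_{a ∈ A} a = N(N−1)/2`. -/
theorem leadingTerm_sum (N : ℕ) (hN : 1 < N) (S : Set ℤ) (hS : IsKdV N S)
    (A : Finset ℤ) (hA : IsLeadingTerm N S A) :
    ∑ a ∈ A, a = (N : ℤ) * ((N : ℤ) - 1) / 2 := by
  obtain ⟨⟨hfin1, hfin2, hcard⟩, hshift⟩ := hS
  obtain ⟨hAcard, hAunion, hAdisj⟩ := hA
  have hNz : (0 : ℤ) < (N : ℤ) := by exact_mod_cast Nat.lt_of_lt_of_le Nat.zero_lt_one hN.le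
  have hNne : ((N : ℤ)) ≠ 0 := ne_of_gt hNz
  -- membership in the shift
  have memShift : ∀ x : ℤ, x ∈ shiftSet S (N : ℤ) ↔ x - (N : ℤ) ∈ S := by
    intro x
    constructor
    · rintro ⟨s, hs, rfl⟩
      simpa using hs
    · intro h
      exact ⟨x - (N : ℤ), h, by ring⟩
  -- elements of A are in S
  have hAS : ∀ a ∈ A, a ∈ S := by
    intro a ha
    rw [← hAunion]
    exact Or.inl (by exact_mod_cast ha)
  -- going up stays in S
  have hup : ∀ s ∈ S, ∀ k : ℕ, s + (k : ℤ) * (N : ℤ) ∈ S := by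
    intro s hs k
    induction k with
    | zero => simpa using hs
    | succ n ih =>
        have h1 : s + (n : ℤ) * (N : ℤ) + (N : ℤ) ∈ S := hshift ⟨s + (n : ℤ) * (N : ℤ), ih, rfl⟩
        have heq : s + (((n + 1 : ℕ)) : ℤ) * (N : ℤ) = s + (n : ℤ) * (N : ℤ) + (N : ℤ) := by
          push_cast; ring
        rw [heq]
        exact h1
  -- elements of A have a - N ∉ S
  have hAmin : ∀ a ∈ A, a - (N : ℤ) ∉ S := by
    intro a ha hmem
    have h1 : a ∈ shiftSet S (N : ℤ) := (memShift a).2 hmem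
    exact Set.eq_empty_iff_forall_notMem.mp hAdisj a ⟨by exact_mod_cast ha, h1⟩
  -- going down from A leaves S
  have hdown : ∀ a ∈ A, ∀ k : ℕ, a - ((k : ℤ) + 1) * (N : ℤ) ∉ S := by
    intro a ha k hmem
    have h1 := hup _ hmem k
    have heq : a - ((k : ℤ) + 1) * (N : ℤ) + (k : ℤ) * (N : ℤ) = a - (N : ℤ) := by ring
    rw [heq] at h1
    exact hAmin a ha h1
  -- S is bounded below
  obtain ⟨b, hb⟩ : ∃ b : ℤ, ∀ s ∈ S, b ≤ s := by
    obtain ⟨c, hc⟩ := hfin1.bddBelow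
    refine ⟨min c 0, fun s hs => ?_⟩
    by_cases h : 0 ≤ s
    · exact le_trans (min_le_right _ _) h
    · exact le_trans (min_le_left _ _) (hc ⟨hs, h⟩)
  -- every element of S is a + k*N for some a ∈ A, k : ℕ
  have hdecomp : ∀ x ∈ S, ∃ a ∈ A, ∃ k : ℕ, x = a + (k : ℤ) * (N : ℤ) := by
    have key : ∀ n : ℕ, ∀ x ∈ S, (x - b).toNat ≤ n →
        ∃ a ∈ A, ∃ k : ℕ, x = a + (k : ℤ) * (N : ℤ) := by
      intro n
      induction n with
      | zero =>
          intro x hx hle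
          by_cases hxA : x ∈ A
          · exact ⟨x, hxA, 0, by simp⟩
          · exfalso
            have hx' : x ∈ (↑A : Set ℤ) ∪ shiftSet S (N : ℤ) := by rw [hAunion]; exact hx
            rcases hx' with h | h
            · exact hxA (by exact_mod_cast h)
            · have h1 : x - (N : ℤ) ∈ S := (memShift x).1 h
              have h2 := hb _ h1
              have h3 := hb _ hx
              omega
      | succ n ih =>
          intro x hx hle
          by_cases hxA : x ∈ A
          · exact ⟨x, hxA, 0, by simp⟩
          · have hx' : x ∈ (↑A : Set ℤ) ∪ shiftSet S (N : ℤ) := by rw [hAunion]; exact hx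
            rcases hx' with h | h
            · exact absurd (by exact_mod_cast h) hxA
            · have h1 : x - (N : ℤ) ∈ S := (memShift x).1 h
              have h2 := hb _ h1
              obtain ⟨a, ha, k, hk⟩ := ih (x - (N : ℤ)) h1 (by omega)
              refine ⟨a, ha, k + 1, ?_⟩
              push_cast
              linarith
    intro x hx
    exact key (x - b).toNat x hx le_rfl
  -- residues are pairwise distinct on A
  have hgen : ∀ a ∈ A, ∀ c ∈ A, a < c → a % (N : ℤ) ≠ c % (N : ℤ) := by
    intro a ha c hc hlt heq
    have hdvd : (N : ℤ) ∣ c - a := Int.ModEq.dvd heq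
    obtain ⟨k, hk⟩ := hdvd
    have hk1 : 1 ≤ k := by nlinarith
    have heq2 : c - (N : ℤ) = a + ((k - 1).toNat : ℤ) * (N : ℤ) := by
      rw [Int.toNat_of_nonneg (by omega)]
      linarith [hk]
    have hcS : c - (N : ℤ) ∈ S := by
      rw [heq2]
      exact hup a (hAS a ha) _
    exact Set.eq_empty_iff_forall_notMem.mp hAdisj c ⟨by exact_mod_cast hc, (memShift c).2 hcS⟩
  have hinj : ∀ a ∈ A, ∀ c ∈ A, a % (N : ℤ) = c % (N : ℤ) → a = c := by
    intro a ha c hc h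
    rcases lt_trichotomy a c with h' | h' | h'
    · exact absurd h (hgen a ha c hc h')
    · exact h'
    · exact absurd h.symm (hgen c hc a ha h')
  -- basic residue facts
  have hmodfacts : ∀ a : ℤ, (N : ℤ) * (a / (N : ℤ)) + a % (N : ℤ) = a ∧
      0 ≤ a % (N : ℤ) ∧ a % (N : ℤ) < (N : ℤ) := by
    intro a
    exact ⟨Int.mul_ediv_add_emod a (N : ℤ), Int.emod_nonneg a hNne, Int.emod_lt_of_pos a hNz⟩
  -- the residue map as a map to ℕ
  set g : ℤ → ℕ := fun a => (a % (N : ℤ)).toNat with hg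
  have hginj : ∀ a ∈ A, ∀ c ∈ A, g a = g c → a = c := by
    intro a ha c hc h
    apply hinj a ha c hc
    have h1 := (hmodfacts a).2.1
    have h2 := (hmodfacts c).2.1
    simp only [hg] at h
    omega
  have himg : A.image g = Finset.range N := by
    apply Finset.eq_of_subset_of_card_le
    · intro m hm
      simp only [Finset.mem_image] at hm
      obtain ⟨a, ha, rfl⟩ := hm
      have h1 := (hmodfacts a).2.1
      have h2 := (hmodfacts a).2.2
      simp only [Finset.mem_range, hg]
      omega
    · rw [Finset.card_range, Finset.card_image_of_injOn (fun a ha c hc h => hginj a ha c hc h),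
        hAcard]
  -- sum of residues
  have hres : ∑ a ∈ A, a % (N : ℤ) = ∑ r ∈ Finset.range N, (r : ℤ) := by
    have h1 : ∑ a ∈ A, ((g a : ℕ) : ℤ) = ∑ r ∈ A.image g, (r : ℤ) :=
      (Finset.sum_image (fun a ha c hc h => hginj a ha c hc h)).symm
    rw [himg] at h1
    rw [← h1]
    apply Finset.sum_congr rfl
    intro a ha
    have := (hmodfacts a).2.1
    simp only [hg]
    omega
  have hgauss : 2 * ∑ r ∈ Finset.range N, (r : ℤ) = (N : ℤ) * ((N : ℤ) - 1) := by
    have h := Finset.sum_range_id_mul_two N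
    have h2 : ((∑ i ∈ Finset.range N, i : ℕ) : ℤ) * 2 = ((N * (N - 1) : ℕ) : ℤ) := by
      exact_mod_cast congrArg (fun x : ℕ => (x : ℤ)) h
    push_cast [Nat.cast_sub (le_of_lt hN)] at h2
    linarith
  -- the two finite difference sets as explicit finsets
  set negF : Finset ℤ :=
    A.biUnion (fun a => (Finset.range (-(a / (N : ℤ))).toNat).image
      (fun k : ℕ => a + (k : ℤ) * (N : ℤ))) with hnegF
  set missF : Finset ℤ :=
    A.biUnion (fun a => (Finset.range ((a / (N : ℤ))).toNat).image
      (fun k : ℕ => a - ((k : ℤ) + 1) * (N : ℤ))) with hmissF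
  -- negative part
  have hnegset : S \ {n : ℤ | 0 ≤ n} = ↑negF := by
    ext x
    simp only [Set.mem_diff, Set.mem_setOf_eq, hnegF, Finset.coe_biUnion, Set.mem_iUnion,
      Finset.coe_image, Set.mem_image, Finset.mem_coe, Finset.mem_range]
    constructor
    · rintro ⟨hxS, hxneg⟩
      obtain ⟨a, ha, k, rfl⟩ := hdecomp _ hxS
      refine ⟨a, ha, k, ?_, rfl⟩
      obtain ⟨hqr, hr0, hrN⟩ := hmodfacts a
      have hsign := kdv_sign_iff (N : ℤ) (a / (N : ℤ)) (a % (N : ℤ)) (k : ℤ)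
        (a + (k : ℤ) * (N : ℤ)) hNz hr0 hrN (by linarith)
      have : ¬ (0 ≤ a / (N : ℤ) + (k : ℤ)) := fun h => hxneg (hsign.2 h)
      omega
    · rintro ⟨a, ha, k, hk, rfl⟩
      refine ⟨hup a (hAS a ha) k, ?_⟩
      obtain ⟨hqr, hr0, hrN⟩ := hmodfacts a
      have hsign := kdv_sign_iff (N : ℤ) (a / (N : ℤ)) (a % (N : ℤ)) (k : ℤ)
        (a + (k : ℤ) * (N : ℤ)) hNz hr0 hrN (by linarith)
      intro hcon
      have := hsign.1 hcon
      omega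
  -- missing nonnegative part
  have hmissset : {n : ℤ | 0 ≤ n} \ S = ↑missF := by
    ext x
    simp only [Set.mem_diff, Set.mem_setOf_eq, hmissF, Finset.coe_biUnion, Set.mem_iUnion,
      Finset.coe_image, Set.mem_image, Finset.mem_coe, Finset.mem_range]
    constructor
    · rintro ⟨hx0, hxS⟩
      -- find a ∈ A in the same residue class
      have hxr : (x % (N : ℤ)).toNat ∈ Finset.range N := by
        have h1 := (hmodfacts x).2.1
        have h2 := (hmodfacts x).2.2
        simp only [Finset.mem_range]
        omega
      rw [← himg] at hxr
      obtain ⟨a, ha, hax⟩ := Finset.mem_image.1 hxr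
      have hmodeq : a % (N : ℤ) = x % (N : ℤ) := by
        have h1 := (hmodfacts x).2.1
        have h2 := (hmodfacts a).2.1
        simp only [hg] at hax
        omega
      have hdvd : (N : ℤ) ∣ x - a := Int.ModEq.dvd hmodeq
      obtain ⟨m, hm⟩ := hdvd
      -- m < 0 since x ∉ S
      have hmneg : m < 0 := by
        by_contra hc
        push_neg at hc
        have : x = a + ((m.toNat : ℤ)) * (N : ℤ) := by
          rw [Int.toNat_of_nonneg hc]; linarith
        exact hxS (this ▸ hup a (hAS a ha) m.toNat)
      -- x ≥ 0 gives q + m ≥ 0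
      obtain ⟨hqr, hr0, hrN⟩ := hmodfacts a
      have hsign := kdv_sign_iff (N : ℤ) (a / (N : ℤ)) (a % (N : ℤ)) m x hNz hr0 hrN
        (by linarith)
      have hqm : 0 ≤ a / (N : ℤ) + m := hsign.1 hx0
      refine ⟨a, ha, (-m - 1).toNat, by omega, ?_⟩
      rw [Int.toNat_of_nonneg (by omega)]
      linarith
    · rintro ⟨a, ha, k, hk, rfl⟩
      constructor
      · obtain ⟨hqr, hr0, hrN⟩ := hmodfacts a
        have hsign := kdv_sign_iff (N : ℤ) (a / (N : ℤ)) (a % (N : ℤ)) (-((k : ℤ) + 1))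
          (a - ((k : ℤ) + 1) * (N : ℤ)) hNz hr0 hrN (by linarith)
        apply hsign.2
        omega
      · exact hdown a ha k
  -- injectivity of the parametrizations
  have hinjup : ∀ a : ℤ, Function.Injective (fun k : ℕ => a + (k : ℤ) * (N : ℤ)) := by
    intro a k k' h
    simp only at h
    have : (k : ℤ) * (N : ℤ) = (k' : ℤ) * (N : ℤ) := by linarith
    exact_mod_cast mul_right_cancel₀ hNne this
  have hinjdown : ∀ a : ℤ, Function.Injective (fun k : ℕ => a - ((k : ℤ) + 1) * (N : ℤ)) := by
    intro a k k' h
    simp only at h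
    have : ((k : ℤ) + 1) * (N : ℤ) = ((k' : ℤ) + 1) * (N : ℤ) := by linarith
    have := mul_right_cancel₀ hNne this
    omega
  -- same residue class for the parametrized elements
  have hclassup : ∀ a : ℤ, ∀ k : ℕ, (a + (k : ℤ) * (N : ℤ)) % (N : ℤ) = a % (N : ℤ) := by
    intro a k
    simp [Int.add_mul_emod_self_right]
  have hclassdown : ∀ a : ℤ, ∀ k : ℕ,
      (a - ((k : ℤ) + 1) * (N : ℤ)) % (N : ℤ) = a % (N : ℤ) := by
    intro a k
    have : a - ((k : ℤ) + 1) * (N : ℤ) = a + (-((k : ℤ) + 1)) * (N : ℤ) := by ring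
    rw [this]
    simp [Int.add_mul_emod_self_right]
  -- cardinalities
  have hnegcard : negF.card = ∑ a ∈ A, (-(a / (N : ℤ))).toNat := by
    rw [hnegF, Finset.card_biUnion]
    · apply Finset.sum_congr rfl
      intro a _
      rw [Finset.card_image_of_injective _ (hinjup a), Finset.card_range]
    · intro a ha c hc hac
      simp only [Finset.disjoint_left]
      intro x hx1 hx2
      simp only [Finset.mem_image, Finset.mem_range] at hx1 hx2
      obtain ⟨k, _, rfl⟩ := hx1
      obtain ⟨k', _, hk'⟩ := hx2
      apply hac
      apply hinj a ha c hc
      rw [← hclassup a k, ← hclassup c k', hk']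
  have hmisscard : missF.card = ∑ a ∈ A, ((a / (N : ℤ))).toNat := by
    rw [hmissF, Finset.card_biUnion]
    · apply Finset.sum_congr rfl
      intro a _
      rw [Finset.card_image_of_injective _ (hinjdown a), Finset.card_range]
    · intro a ha c hc hac
      simp only [Finset.disjoint_left]
      intro x hx1 hx2
      simp only [Finset.mem_image, Finset.mem_range] at hx1 hx2
      obtain ⟨k, _, rfl⟩ := hx1
      obtain ⟨k', _, hk'⟩ := hx2
      apply hac
      apply hinj a ha c hc
      rw [← hclassdown a k, ← hclassdown c k', hk']
  -- equality of cardinalities gives sum of quotients = 0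
  have hcard2 : ∑ a ∈ A, (-(a / (N : ℤ))).toNat = ∑ a ∈ A, ((a / (N : ℤ))).toNat := by
    rw [← hnegcard, ← hmisscard]
    have e1 : (S \ {n : ℤ | 0 ≤ n}).ncard = negF.card := by
      rw [hnegset, Set.ncard_coe_finset]
    have e2 : ({n : ℤ | 0 ≤ n} \ S).ncard = missF.card := by
      rw [hmissset, Set.ncard_coe_finset]
    omega
  have hqsum : ∑ a ∈ A, a / (N : ℤ) = 0 := by
    have h1 : ∑ a ∈ A, a / (N : ℤ) =
        ∑ a ∈ A, (((a / (N : ℤ)).toNat : ℤ) - ((-(a / (N : ℤ))).toNat : ℤ)) := by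
      apply Finset.sum_congr rfl
      intro a _
      omega
    rw [h1, Finset.sum_sub_distrib]
    have h2 : ((∑ a ∈ A, (-(a / (N : ℤ))).toNat : ℕ) : ℤ) =
        ((∑ a ∈ A, ((a / (N : ℤ))).toNat : ℕ) : ℤ) := by exact_mod_cast hcard2
    push_cast at h2
    omega
  -- finish
  have hsum : ∑ a ∈ A, a = ∑ a ∈ A, ((N : ℤ) * (a / (N : ℤ)) + a % (N : ℤ)) := by
    apply Finset.sum_congr rfl
    intro a _
    exact (hmodfacts a).1.symm
  rw [hsum, Finset.sum_add_distrib, ← Finset.mul_sum, hqsum, mul_zero, zero_add, hres]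
  omega
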